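/- Let F = BV(v) be the class of functions f : [0,1] → ℝ with total variation at most v, and suppose 4t < v. Then the dual t-fat-shattering dimension satisfies d*_F(t) ≥ ⌊log₂(v/t)⌋. -/

import Mathlib

/-- `f` has total variation at most `v` on `[0,1]`: over every finite monotone
sequence of points of `[0,1]`, the sum of absolute increments is at most `v`. -/
def VarLe (f : ℝ → ℝ) (v : ℝ) : Prop :=
  ∀ (k : ℕ) (x : Fin (k + 1) → ℝ), Monotone x → (∀ j, x j ∈ Set.Icc (0 : ℝ) 1) →
    ∑ j : Fin k, |f (x j.succ) - f (x j.castSucc)| ≤ v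

/-- The class BV(v) of functions `[0,1] → ℝ` of total variation at most `v`. -/
def BV (v : ℝ) : Set (ℝ → ℝ) := {f | VarLe f v}

/-- A set of `n` (distinct) functions of `F` is `t`-shattered by the dual class
`F*` (whose elements are evaluation points in `[0,1]`). -/
def DualShattered (F : Set (ℝ → ℝ)) (t : ℝ) (n : ℕ) : Prop :=
  ∃ f : Fin n → ℝ → ℝ, (∀ i, f i ∈ F) ∧ Function.Injective f ∧
    ∃ r : Fin n → ℝ, ∀ b : Fin n → Bool, ∃ x ∈ Set.Icc (0 : ℝ) 1,
      ∀ i, (b i = true → r i + t ≤ f i x) ∧ (b i = false → f i x ≤ r i - t)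

/- ### Auxiliary material -/

/-- Gray-code bit: XOR of bits `log p` and `log p + 1` (with `p` a power of two). -/
def Bfun (p m : ℕ) : ℕ := (m / p % 2 + m / (2 * p) % 2) % 2

lemma abs_chain (F : ℕ → ℝ) : ∀ {a b : ℕ}, a ≤ b →
    |F b - F a| ≤ ∑ m ∈ Finset.Ico a b, |F (m + 1) - F m| := by
  intro a b h
  induction b with
  | zero =>
    obtain rfl : a = 0 := Nat.le_zero.mp h
    simp
  | succ b ih =>
    rcases eq_or_lt_of_le h with rfl | h'
    · simp
    · have hab : a ≤ b := Nat.lt_succ_iff.mp h'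
      rw [Finset.sum_Ico_succ_top hab]
      have h1 := ih hab
      have h2 : |F (b + 1) - F a| ≤ |F (b + 1) - F b| + |F b - F a| := abs_sub_le _ _ _
      linarith

lemma sum_abs_le (F : ℕ → ℝ) (M k : ℕ) (a : Fin (k + 1) → ℕ)
    (hmono : Monotone a) (hle : ∀ j, a j ≤ M) :
    ∑ j : Fin k, |F (a j.succ) - F (a j.castSucc)| ≤
      ∑ m ∈ Finset.range M, |F (m + 1) - F m| := by
  have hstep : ∀ j : Fin k, (j.castSucc : Fin (k+1)) ≤ j.succ := by
    intro j; rw [Fin.le_def]; simp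
  calc ∑ j : Fin k, |F (a j.succ) - F (a j.castSucc)|
      ≤ ∑ j : Fin k, ∑ m ∈ Finset.Ico (a j.castSucc) (a j.succ), |F (m + 1) - F m| := by
        exact Finset.sum_le_sum fun j _ => abs_chain F (hmono (hstep j))
    _ = ∑ m ∈ Finset.univ.biUnion
          (fun j : Fin k => Finset.Ico (a j.castSucc) (a j.succ)), |F (m + 1) - F m| := by
        refine (Finset.sum_biUnion ?_).symm
        intro j _ j' _ hne
        have : (j : Fin k) < j' ∨ j' < j := Ne.lt_or_gt hne
        have key : ∀ u u' : Fin k, u < u' →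
            Disjoint (Finset.Ico (a u.castSucc) (a u.succ))
              (Finset.Ico (a u'.castSucc) (a u'.succ)) := by
          intro u u' hu
          have hseq : (u.succ : Fin (k+1)) ≤ u'.castSucc := by
            rw [Fin.le_def]; simp; exact hu
          have := hmono hseq
          rw [Finset.disjoint_left]
          intro m hm hm'
          simp only [Finset.mem_Ico] at hm hm'
          omega
        rcases this with h | h
        · exact key _ _ h
        · exact (key _ _ h).symm
    _ ≤ ∑ m ∈ Finset.range M, |F (m + 1) - F m| := by
        refine Finset.sum_le_sum_of_subset_of_nonneg ?_ (fun _ _ _ => abs_nonneg _)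
        intro m hm
        simp only [Finset.mem_biUnion, Finset.mem_Ico] at hm
        obtain ⟨j, _, _, hlt⟩ := hm
        have := hle j.succ
        simp only [Finset.mem_range]
        omega

lemma count_le (M p r : ℕ) (hp : 0 < p) (hdvd : p ∣ M) :
    ((Finset.range M).filter (fun m => m % p = r)).card ≤ M / p := by
  have key : ((Finset.range M).filter (fun m => m % p = r)).card ≤
      (Finset.range (M / p)).card := by
    apply Finset.card_le_card_of_injOn (fun m => m / p)
    · intro m hm
      simp only [Finset.mem_coe, Finset.coe_filter, Finset.coe_range, Set.mem_Iio, Finset.mem_filter, Finset.mem_range, Set.mem_setOf_eq] at hm ⊢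
      exact Nat.div_lt_div_of_lt_of_dvd hdvd hm.1
    · intro m hm m' hm' h
      simp only [Finset.coe_filter, Finset.mem_range, Set.mem_setOf_eq] at hm hm'
      have e1 : p * (m / p) + m % p = m := Nat.div_add_mod m p
      have e2 : p * (m' / p) + m' % p = m' := Nat.div_add_mod m' p
      simp only at h
      rw [h, hm.2, hm'.2] at *
      omega
  simpa using key

lemma change_lemma (p m : ℕ) (hp : 0 < p)
    (h : Bfun p (m + 1) ≠ Bfun p m) : m % (2 * p) = p - 1 := by
  unfold Bfun at h
  by_cases h1 : p ∣ m + 1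
  · by_cases h2 : 2 * p ∣ m + 1
    · exfalso
      rw [Nat.succ_div_of_dvd h1, Nat.succ_div_of_dvd h2] at h
      omega
    · obtain ⟨c, hc⟩ := h1
      have hmp : m % p = p - 1 := by
        cases c with
        | zero => omega
        | succ c' =>
          rw [Nat.mul_succ] at hc
          have hm' : m = p * c' + (p - 1) := by omega
          rw [hm', Nat.mul_add_mod, Nat.mod_eq_of_lt (by omega)]
      have h2p : m % (2 * p) % p = m % p := Nat.mod_mod_of_dvd m (dvd_mul_left p 2)
      have hA : m % (2 * p) < 2 * p := Nat.mod_lt _ (by omega)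
      have hdlt : m % (2 * p) / p < 2 := Nat.div_lt_of_lt_mul (by omega)
      have hAe : m % (2 * p) = p * (m % (2 * p) / p) + (p - 1) := by
        have := Nat.div_add_mod (m % (2 * p)) p
        omega
      have hdd : m % (2 * p) / p = 0 ∨ m % (2 * p) / p = 1 :=
        Nat.le_one_iff_eq_zero_or_eq_one.mp (Nat.lt_succ_iff.mp hdlt)
      rcases hdd with h0 | h1'
      · rw [h0] at hAe; omega
      · exfalso
        apply h2
        have hd := Nat.div_add_mod m (2 * p)
        refine ⟨m / (2 * p) + 1, ?_⟩
        rw [Nat.mul_add]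
        rw [h1'] at hAe
        omega
  · have h2 : ¬ 2 * p ∣ m + 1 := fun hd => h1 (dvd_trans (dvd_mul_left p 2) hd)
    rw [Nat.succ_div_of_not_dvd h1, Nat.succ_div_of_not_dvd h2] at h
    omega

lemma exists_code (c : ℕ → ℕ) (hc1 : ∀ j, c j ≤ 1) (n : ℕ) :
    ∃ k, k < 2 ^ n ∧ ∀ j, k / 2 ^ j % 2 = if j < n then c j else 0 := by
  induction n with
  | zero => exact ⟨0, by norm_num, fun j => by simp⟩
  | succ n ih =>
    obtain ⟨k, hk, hb⟩ := ih
    by_cases hc : c n = 1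
    · refine ⟨k + 2 ^ n, ?_, ?_⟩
      · have : (2:ℕ) ^ (n + 1) = 2 ^ n * 2 := pow_succ 2 n
        omega
      · intro j
        rcases lt_trichotomy j n with hj | hj | hj
        · have hdvd : (2:ℕ) ^ j ∣ 2 ^ n := pow_dvd_pow 2 hj.le
          rw [Nat.add_div_of_dvd_left hdvd, Nat.pow_div hj.le (by norm_num)]
          have hnj : n - j = (n - j - 1) + 1 := by omega
          rw [hnj, pow_succ]
          rw [show k / 2 ^ j + 2 ^ (n - j - 1) * 2 = k / 2 ^ j + 2 * 2 ^ (n - j - 1) by ring]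
          rw [Nat.add_mul_mod_self_left, hb j, if_pos hj, if_pos (by omega)]
        · subst hj
          rw [Nat.add_div_right _ (Nat.two_pow_pos j),
            Nat.div_eq_of_lt hk, if_pos (Nat.lt_succ_self j)]
          omega
        · have hlt : k + 2 ^ n < 2 ^ j := by
            have h1 : (2:ℕ) ^ (n + 1) = 2 ^ n * 2 := pow_succ 2 n
            have h2 : (2:ℕ) ^ (n + 1) ≤ 2 ^ j := Nat.pow_le_pow_right (by norm_num) hj
            omega
          rw [Nat.div_eq_of_lt hlt, if_neg (by omega)]
    · have hc0 : c n = 0 := by have := hc1 n; omega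
      refine ⟨k, lt_of_lt_of_le hk (Nat.pow_le_pow_right (by norm_num) (Nat.le_succ n)), ?_⟩
      intro j
      rw [hb j]
      rcases lt_trichotomy j n with hj | hj | hj
      · rw [if_pos hj, if_pos (by omega)]
      · subst hj
        rw [if_neg (by omega), if_pos (Nat.lt_succ_self j), hc0]
      · rw [if_neg (by omega), if_neg (by omega)]

theorem stmt4 (v t : ℝ) (ht : 0 < t) (htv : 4 * t < v) :
    DualShattered (BV v) t (Nat.floor (Real.logb 2 (v / t))) := by
  set n := Nat.floor (Real.logb 2 (v / t)) with hn
  have hvt : (4:ℝ) < v / t := by rw [lt_div_iff₀ ht]; linarith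
  have hvt0 : (0:ℝ) < v / t := by linarith
  have hn1 : 1 ≤ n := by
    apply Nat.le_floor
    have h2 : Real.logb 2 2 ≤ Real.logb 2 (v / t) :=
      Real.logb_le_logb_of_le (by norm_num) (by norm_num) (by linarith)
    simpa using h2
  have hpow : (2:ℝ) ^ n ≤ v / t := by
    have h1 : (n : ℝ) ≤ Real.logb 2 (v / t) :=
      Nat.floor_le (Real.logb_nonneg (by norm_num) (by linarith))
    calc (2:ℝ) ^ n = (2:ℝ) ^ (n : ℝ) := (Real.rpow_natCast 2 n).symm
      _ ≤ (2:ℝ) ^ Real.logb 2 (v / t) :=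
          Real.rpow_le_rpow_of_exponent_le (by norm_num) h1
      _ = v / t := Real.rpow_logb (by norm_num) (by norm_num) hvt0
  have hveq : t * 2 ^ n ≤ v := by
    have := mul_le_mul_of_nonneg_left hpow ht.le
    rwa [mul_div_cancel₀ _ (ne_of_gt ht)] at this
  -- the construction
  set N : ℕ := 2 ^ n with hN
  have hN1 : 1 ≤ N := Nat.one_le_two_pow
  set idx : ℝ → ℕ := fun x => min (⌊x * (2:ℝ) ^ n⌋₊) (N - 1) with hidx
  have hidxmono : Monotone idx := by
    intro x y hxy
    exact min_le_min (Nat.floor_mono (mul_le_mul_of_nonneg_right hxy (by positivity))) le_rfl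
  have hidxle : ∀ x, idx x ≤ N - 1 := fun x => min_le_right _ _
  have hidxpt : ∀ K : ℕ, K < N → idx ((K : ℝ) / 2 ^ n) = K := by
    intro K hK
    have h2 : ((K : ℝ) / 2 ^ n) * 2 ^ n = K := div_mul_cancel₀ _ (by positivity)
    simp only [hidx, h2, Nat.floor_natCast]
    omega
  have hptmem : ∀ K : ℕ, K < N → (K : ℝ) / 2 ^ n ∈ Set.Icc (0:ℝ) 1 := by
    intro K hK
    constructor
    · positivity
    · rw [div_le_one (by positivity)]
      have h1 : (K:ℝ) < (N:ℝ) := by exact_mod_cast hK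
      rw [hN] at h1
      push_cast at h1
      linarith
  classical
  -- realization of every sign pattern
  have hreal : ∀ b : Fin n → Bool, ∃ K, K < N ∧
      ∀ i : Fin n, Bfun (2 ^ (i:ℕ)) K = (if b i then 1 else 0) := by
    intro b
    set bval : ℕ → ℕ := fun l => if h : l < n then (if b ⟨l, h⟩ then 1 else 0) else 0 with hbval
    have hbval1 : ∀ l, bval l ≤ 1 := by
      intro l; simp only [hbval]
      split
      · split <;> omega
      · omega
    set c : ℕ → ℕ := fun j => (∑ l ∈ Finset.Ico j n, bval l) % 2 with hcdef
    have hc1 : ∀ j, c j ≤ 1 := fun j => Nat.le_of_lt_succ (Nat.mod_lt _ (by norm_num))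
    have hcrec : ∀ j, j < n → c j = (bval j + c (j + 1)) % 2 := by
      intro j hj
      simp only [hcdef]
      rw [Finset.sum_eq_sum_Ico_succ_bot hj]
      generalize (∑ l ∈ Finset.Ico (j + 1) n, bval l) = S
      omega
    have hcn : ∀ j, n ≤ j → c j = 0 := by
      intro j hj
      simp only [hcdef, Finset.Ico_eq_empty (by omega : ¬ j < n), Finset.sum_empty,
        Nat.zero_mod]
    obtain ⟨K, hK, hKb⟩ := exists_code c hc1 n
    refine ⟨K, hK, ?_⟩
    intro i
    have e1 : K / 2 ^ (i:ℕ) % 2 = c i := by rw [hKb, if_pos i.isLt]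
    have e2 : K / (2 * 2 ^ (i:ℕ)) % 2 = c ((i:ℕ) + 1) := by
      rw [show 2 * 2 ^ (i:ℕ) = 2 ^ ((i:ℕ) + 1) by rw [pow_succ]; ring, hKb]
      by_cases h : (i:ℕ) + 1 < n
      · rw [if_pos h]
      · rw [if_neg h, hcn _ (by omega)]
    unfold Bfun
    rw [e1, e2]
    have h3 := hcrec i i.isLt
    have h4 := hc1 ((i:ℕ) + 1)
    have h5 : bval (i:ℕ) = (if b i then 1 else 0) := by
      simp only [hbval, dif_pos i.isLt, Fin.eta]
    rw [← h5]
    have h6 := hbval1 (i:ℕ)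
    omega
  -- membership in BV v
  have hmem : ∀ i : Fin n,
      (fun x => if Bfun (2 ^ (i:ℕ)) (idx x) = 1 then t else -t) ∈ BV v := by
    intro i
    simp only [BV, Set.mem_setOf_eq, VarLe]
    intro k x hmx hx
    set p : ℕ := 2 ^ (i:ℕ) with hp
    have hp0 : 0 < p := Nat.two_pow_pos _
    set F : ℕ → ℝ := fun m => if Bfun p m = 1 then t else -t with hF
    have step1 : ∑ j : Fin k, |F (idx (x j.succ)) - F (idx (x j.castSucc))| ≤
        ∑ m ∈ Finset.range (N - 1), |F (m + 1) - F m| :=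
      sum_abs_le F (N - 1) k (fun j => idx (x j)) (hidxmono.comp hmx) (fun j => hidxle _)
    refine le_trans step1 ?_
    have step2 : ∑ m ∈ Finset.range (N - 1), |F (m + 1) - F m| ≤
        ∑ m ∈ Finset.range (N - 1),
          (if Bfun p (m + 1) ≠ Bfun p m then 2 * t else 0) := by
      apply Finset.sum_le_sum
      intro m _
      by_cases hB : Bfun p (m + 1) = Bfun p m
      · have hFe : F (m + 1) = F m := by simp only [hF, hB]
        rw [hFe, sub_self, abs_zero, if_neg (fun hcon => hcon hB)]
      · rw [if_pos hB]
        have hb1 : |F (m + 1)| ≤ t := by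
          simp only [hF]; split <;> simp [abs_of_pos ht, abs_of_neg, ht.le]
        have hb2 : |F m| ≤ t := by
          simp only [hF]; split <;> simp [abs_of_pos ht, abs_of_neg, ht.le]
        calc |F (m + 1) - F m| ≤ |F (m + 1)| + |F m| := abs_sub _ _
          _ ≤ 2 * t := by linarith
    refine le_trans step2 ?_
    have step3 : ∑ m ∈ Finset.range (N - 1),
        (if Bfun p (m + 1) ≠ Bfun p m then 2 * t else 0) =
        (((Finset.range (N - 1)).filter (fun m => Bfun p (m + 1) ≠ Bfun p m)).card : ℝ)
          * (2 * t) := by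
      rw [← Finset.sum_filter, Finset.sum_const, nsmul_eq_mul]
    rw [step3]
    have hsub : (Finset.range (N - 1)).filter (fun m => Bfun p (m + 1) ≠ Bfun p m) ⊆
        (Finset.range N).filter (fun m => m % (2 * p) = p - 1) := by
      intro m hm
      simp only [Finset.mem_filter, Finset.mem_range] at hm ⊢
      exact ⟨by omega, change_lemma p m hp0 hm.2⟩
    have hdvd : (2 * p) ∣ N := by
      rw [hN, hp, show 2 * 2 ^ (i:ℕ) = 2 ^ ((i:ℕ) + 1) by rw [pow_succ]; ring]
      exact pow_dvd_pow 2 i.isLt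
    have hcard : ((Finset.range (N - 1)).filter
        (fun m => Bfun p (m + 1) ≠ Bfun p m)).card ≤ 2 ^ (n - 1) := by
      refine le_trans (Finset.card_le_card hsub) (le_trans (count_le N (2 * p) (p - 1)
        (by omega) hdvd) ?_)
      rw [hN, hp, show 2 * 2 ^ (i:ℕ) = 2 ^ ((i:ℕ) + 1) by rw [pow_succ]; ring,
        Nat.pow_div i.isLt (by norm_num)]
      exact Nat.pow_le_pow_right (by norm_num) (by omega)
    calc (((Finset.range (N - 1)).filter
          (fun m => Bfun p (m + 1) ≠ Bfun p m)).card : ℝ) * (2 * t)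
        ≤ ((2 ^ (n - 1) : ℕ) : ℝ) * (2 * t) := by
          apply mul_le_mul_of_nonneg_right _ (by linarith)
          exact_mod_cast hcard
      _ = t * 2 ^ n := by
          push_cast
          rw [show (2:ℝ) ^ (n - 1) * (2 * t) = t * ((2:ℝ) ^ (n - 1) * 2) by ring,
            ← pow_succ, Nat.sub_add_cancel hn1]
      _ ≤ v := hveq
  refine ⟨fun i x => if Bfun (2 ^ (i:ℕ)) (idx x) = 1 then t else -t, hmem, ?_, ?_⟩
  · -- injectivity
    intro i j hij
    by_contra hne
    obtain ⟨K, hK, hKB⟩ := hreal (fun l => decide (l = i))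
    have h1 := congrFun hij ((K : ℝ) / 2 ^ n)
    simp only [hidxpt K hK] at h1
    have hBi := hKB i
    have hBj := hKB j
    simp only [decide_eq_true_eq, if_pos rfl] at hBi
    rw [if_neg (by simpa using fun h => hne h.symm)] at hBj
    rw [hBi, hBj] at h1
    norm_num at h1
    linarith
  · -- shattering
    refine ⟨fun _ => 0, ?_⟩
    intro b
    obtain ⟨K, hK, hKB⟩ := hreal b
    refine ⟨(K : ℝ) / 2 ^ n, hptmem K hK, ?_⟩
    intro i
    constructor
    · intro hbi
      show (0:ℝ) + t ≤ if Bfun (2 ^ (i:ℕ)) (idx ((K : ℝ) / 2 ^ n)) = 1 then t else -t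
      rw [hidxpt K hK, hKB i, hbi, if_pos rfl, if_pos rfl]
      linarith
    · intro hbi
      show (if Bfun (2 ^ (i:ℕ)) (idx ((K : ℝ) / 2 ^ n)) = 1 then t else -t) ≤ (0:ℝ) - t
      rw [hidxpt K hK, hKB i, hbi]
      norm_num
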